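/- Let R be a ring, M a right R-module, W = End_R(M), α an anti-endomorphism of W, and n ≥ 1. Then the general bilinear form b_{T_nα} on Mⁿ, associated to the anti-endomorphism T_nα of End_R(Mⁿ) = Matₙ(W), is similar to the n-fold orthogonal sum n·b_α; in particular K_{T_nα} ≅ K_α as double R-modules. -/

import Mathlib

open MulOpposite TensorProduct Function

universe u v w v'

section Core

/-- An anti-endomorphism of a ring: additive, unital, reverses multiplication. -/
def IsAntiEndo {W : Type*} [Ring W] (α : W → W) : Prop :=
  (∀ u v : W, α (u + v) = α u + α v) ∧ α 1 = 1 ∧ ∀ u v : W, α (u * v) = α v * α u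

/-- An anti-automorphism of a ring: a bijective anti-endomorphism. -/
def IsAntiAuto {W : Type*} [Ring W] (α : W → W) : Prop :=
  IsAntiEndo α ∧ Function.Bijective α

/-- An inner automorphism of a ring: conjugation by a unit. -/
def IsInnerAut {W : Type*} [Ring W] (φ : W → W) : Prop :=
  ∃ u : Wˣ, ∀ w : W, φ w = ↑u * w * ↑u⁻¹

variable (R : Type u) [Ring R]

/-- A double `R`-module structure on the additive group `K`: two commuting
right `R`-module structures `m0` and `m1`. -/
structure DoubleModule (K : Type v) [AddCommGroup K] where
  m0 : K → R → K
  m1 : K → R → K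
  m0_add_left : ∀ (k k' : K) (r : R), m0 (k + k') r = m0 k r + m0 k' r
  m0_add_right : ∀ (k : K) (r r' : R), m0 k (r + r') = m0 k r + m0 k r'
  m0_mul : ∀ (k : K) (r r' : R), m0 k (r * r') = m0 (m0 k r) r'
  m0_one : ∀ k : K, m0 k 1 = k
  m1_add_left : ∀ (k k' : K) (r : R), m1 (k + k') r = m1 k r + m1 k' r
  m1_add_right : ∀ (k : K) (r r' : R), m1 k (r + r') = m1 k r + m1 k r'
  m1_mul : ∀ (k : K) (r r' : R), m1 k (r * r') = m1 (m1 k r) r'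
  m1_one : ∀ k : K, m1 k 1 = k
  comm : ∀ (k : K) (a b : R), m1 (m0 k a) b = m0 (m1 k b) a

variable {R}

/-- A homomorphism of double `R`-modules. -/
def IsDoubleHom {K : Type v} {K' : Type w} [AddCommGroup K] [AddCommGroup K']
    (DK : DoubleModule R K) (DK' : DoubleModule R K') (f : K → K') : Prop :=
  (∀ k k' : K, f (k + k') = f k + f k') ∧
  (∀ (k : K) (r : R), f (DK.m0 k r) = DK'.m0 (f k) r) ∧
  (∀ (k : K) (r : R), f (DK.m1 k r) = DK'.m1 (f k) r)

/-- An isomorphism of double `R`-modules. -/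
def IsDoubleIso {K : Type v} {K' : Type w} [AddCommGroup K] [AddCommGroup K']
    (DK : DoubleModule R K) (DK' : DoubleModule R K') (f : K → K') : Prop :=
  IsDoubleHom DK DK' f ∧ Function.Bijective f

/-- An anti-automorphism of a double `R`-module: an additive bijection exchanging
the two module structures. -/
def IsDoubleAntiAuto {K : Type v} [AddCommGroup K] (DK : DoubleModule R K) (θ : K → K) : Prop :=
  Function.Bijective θ ∧ (∀ k k' : K, θ (k + k') = θ k + θ k') ∧
  (∀ (k : K) (r : R), θ (DK.m0 k r) = DK.m1 (θ k) r) ∧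
  (∀ (k : K) (r : R), θ (DK.m1 k r) = DK.m0 (θ k) r)

variable (R)

/-- A general bilinear form on a right `R`-module `M` (encoded as a module over `Rᵐᵒᵖ`)
with values in a double `R`-module `(K, DK)`. -/
structure GBF (M : Type v) [AddCommGroup M] [Module Rᵐᵒᵖ M]
    (K : Type w) [AddCommGroup K] (DK : DoubleModule R K) where
  b : M → M → K
  add_left : ∀ x x' y : M, b (x + x') y = b x y + b x' y
  add_right : ∀ x y y' : M, b x (y + y') = b x y + b x y'
  smul_left : ∀ (x y : M) (r : R), b (op r • x) y = DK.m0 (b x y) r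
  smul_right : ∀ (x y : M) (r : R), b x (op r • y) = DK.m1 (b x y) r

variable {R}

namespace GBF

variable {M : Type v} [AddCommGroup M] [Module Rᵐᵒᵖ M]
  {K : Type w} [AddCommGroup K] {DK : DoubleModule R K}

/-- The right adjoint of `β` is injective. -/
def RightInjective (β : GBF R M K DK) : Prop :=
  ∀ x x' : M, (∀ y : M, β.b y x = β.b y x') → x = x'

/-- The right adjoint of `β` is bijective onto `Hom_R(M, K₀)`. -/
def RightRegular (β : GBF R M K DK) : Prop :=
  β.RightInjective ∧
  ∀ f : M → K, (∀ y y' : M, f (y + y') = f y + f y') →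
    (∀ (y : M) (r : R), f (op r • y) = DK.m0 (f y) r) →
    ∃ x : M, ∀ y : M, f y = β.b y x

/-- The left adjoint of `β` is injective. -/
def LeftInjective (β : GBF R M K DK) : Prop :=
  ∀ x x' : M, (∀ y : M, β.b x y = β.b x' y) → x = x'

/-- The left adjoint of `β` is bijective onto `Hom_R(M, K₁)`. -/
def LeftRegular (β : GBF R M K DK) : Prop :=
  β.LeftInjective ∧
  ∀ f : M → K, (∀ y y' : M, f (y + y') = f y + f y') →
    (∀ (y : M) (r : R), f (op r • y) = DK.m1 (f y) r) →
    ∃ x : M, ∀ y : M, f y = β.b x y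

/-- `α` is an adjoint anti-endomorphism for `β`: `β(w x, y) = β(x, α(w) y)`. -/
def IsAdjoint (β : GBF R M K DK) (α : Module.End Rᵐᵒᵖ M → Module.End Rᵐᵒᵖ M) : Prop :=
  ∀ (w : Module.End Rᵐᵒᵖ M) (x y : M), β.b (w x) y = β.b x (α w y)

/-- Similarity of general bilinear forms on the same module. -/
def Similar {K' : Type v'} [AddCommGroup K'] {DK' : DoubleModule R K'}
    (β : GBF R M K DK) (β' : GBF R M K' DK') : Prop :=
  ∃ f : K → K', IsDoubleIso DK DK' f ∧ ∀ x y : M, β'.b x y = f (β.b x y)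

end GBF

section Kalpha

variable {M : Type v} [AddCommGroup M] [Module Rᵐᵒᵖ M]

/-- The subgroup of `M ⊗_ℤ M` generated by the elements `(w x) ⊗ y - x ⊗ (α w y)`. -/
def kalphaRel (α : Module.End Rᵐᵒᵖ M → Module.End Rᵐᵒᵖ M) : Submodule ℤ (M ⊗[ℤ] M) :=
  Submodule.span ℤ
    {z | ∃ (w : Module.End Rᵐᵒᵖ M) (x y : M), z = (w x) ⊗ₜ[ℤ] y - x ⊗ₜ[ℤ] (α w y)}

/-- `K_α`, the quotient of `M ⊗_ℤ M` by the relations `(w x) ⊗ y = x ⊗ (α w y)`. -/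
abbrev Kalpha (α : Module.End Rᵐᵒᵖ M → Module.End Rᵐᵒᵖ M) : Type _ :=
  (M ⊗[ℤ] M) ⧸ kalphaRel α

/-- The map `x ⊗ y ↦ (x·r) ⊗ y` on `M ⊗_ℤ M`. -/
noncomputable def smulLeftMap (r : R) : (M ⊗[ℤ] M) →ₗ[ℤ] (M ⊗[ℤ] M) :=
  TensorProduct.map ((DistribMulAction.toAddMonoidHom M (op r : Rᵐᵒᵖ)).toIntLinearMap)
    LinearMap.id

/-- The map `x ⊗ y ↦ x ⊗ (y·r)` on `M ⊗_ℤ M`. -/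
noncomputable def smulRightMap (r : R) : (M ⊗[ℤ] M) →ₗ[ℤ] (M ⊗[ℤ] M) :=
  TensorProduct.map LinearMap.id
    ((DistribMulAction.toAddMonoidHom M (op r : Rᵐᵒᵖ)).toIntLinearMap)

theorem smulLeftMap_tmul (r : R) (x y : M) :
    smulLeftMap (M := M) r (x ⊗ₜ[ℤ] y) = (op r • x) ⊗ₜ[ℤ] y := by
  first
  | rfl
  | (unfold smulLeftMap; erw [TensorProduct.map_tmul]; rfl)

theorem smulRightMap_tmul (r : R) (x y : M) :
    smulRightMap (M := M) r (x ⊗ₜ[ℤ] y) = x ⊗ₜ[ℤ] (op r • y) := by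
  first
  | rfl
  | (unfold smulRightMap; erw [TensorProduct.map_tmul]; rfl)

theorem kalphaRel_le_left (α : Module.End Rᵐᵒᵖ M → Module.End Rᵐᵒᵖ M) (r : R) :
    kalphaRel α ≤ (kalphaRel α).comap (smulLeftMap (M := M) r) := by
  rw [kalphaRel, Submodule.span_le]
  rintro _ ⟨w, x, y, rfl⟩
  rw [SetLike.mem_coe, Submodule.mem_comap, map_sub]
  have h1 : smulLeftMap (M := M) r ((w x) ⊗ₜ[ℤ] y) = (w (op r • x)) ⊗ₜ[ℤ] y := by
    rw [smulLeftMap_tmul, map_smul]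
  have h2 : smulLeftMap (M := M) r (x ⊗ₜ[ℤ] (α w y)) = (op r • x) ⊗ₜ[ℤ] (α w y) := by
    rw [smulLeftMap_tmul]
  rw [h1, h2]
  exact Submodule.subset_span ⟨w, op r • x, y, rfl⟩

theorem kalphaRel_le_right (α : Module.End Rᵐᵒᵖ M → Module.End Rᵐᵒᵖ M) (r : R) :
    kalphaRel α ≤ (kalphaRel α).comap (smulRightMap (M := M) r) := by
  rw [kalphaRel, Submodule.span_le]
  rintro _ ⟨w, x, y, rfl⟩
  rw [SetLike.mem_coe, Submodule.mem_comap, map_sub]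
  have h1 : smulRightMap (M := M) r ((w x) ⊗ₜ[ℤ] y) = (w x) ⊗ₜ[ℤ] (op r • y) := by
    rw [smulRightMap_tmul]
  have h2 : smulRightMap (M := M) r (x ⊗ₜ[ℤ] (α w y)) = x ⊗ₜ[ℤ] (α w (op r • y)) := by
    rw [smulRightMap_tmul, map_smul]
  rw [h1, h2]
  exact Submodule.subset_span ⟨w, x, op r • y, rfl⟩

/-- The `m0`-action on `K_α`. -/
noncomputable def kSmul0 (α : Module.End Rᵐᵒᵖ M → Module.End Rᵐᵒᵖ M) (r : R) :
    Kalpha α →ₗ[ℤ] Kalpha α :=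
  Submodule.mapQ _ _ (smulLeftMap r) (kalphaRel_le_left α r)

/-- The `m1`-action on `K_α`. -/
noncomputable def kSmul1 (α : Module.End Rᵐᵒᵖ M → Module.End Rᵐᵒᵖ M) (r : R) :
    Kalpha α →ₗ[ℤ] Kalpha α :=
  Submodule.mapQ _ _ (smulRightMap r) (kalphaRel_le_right α r)

theorem kSmul0_mk (α : Module.End Rᵐᵒᵖ M → Module.End Rᵐᵒᵖ M) (r : R) (t : M ⊗[ℤ] M) :
    kSmul0 α r (Submodule.Quotient.mk t) = Submodule.Quotient.mk (smulLeftMap r t) := rfl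

theorem kSmul1_mk (α : Module.End Rᵐᵒᵖ M → Module.End Rᵐᵒᵖ M) (r : R) (t : M ⊗[ℤ] M) :
    kSmul1 α r (Submodule.Quotient.mk t) = Submodule.Quotient.mk (smulRightMap r t) := rfl

/-- The double `R`-module structure on `K_α`. -/
noncomputable def KalphaDM (α : Module.End Rᵐᵒᵖ M → Module.End Rᵐᵒᵖ M) :
    DoubleModule R (Kalpha α) where
  m0 k r := kSmul0 α r k
  m1 k r := kSmul1 α r k
  m0_add_left k k' r := map_add _ k k'
  m0_add_right := by
    intro k r r'
    try dsimp only
    induction k using Submodule.Quotient.induction_on with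
    | _ t =>
      rw [kSmul0_mk, kSmul0_mk, kSmul0_mk, ← Submodule.Quotient.mk_add]
      congr 1
      induction t with
      | zero => simp
      | tmul x y => simp [smulLeftMap_tmul, op_add, add_smul, TensorProduct.add_tmul]
      | add a b ha hb => rw [map_add, map_add, map_add, ha, hb]; abel
  m0_mul := by
    intro k r r'
    try dsimp only
    induction k using Submodule.Quotient.induction_on with
    | _ t =>
      rw [kSmul0_mk, kSmul0_mk, kSmul0_mk]
      congr 1
      induction t with
      | zero => simp
      | tmul x y => simp [smulLeftMap_tmul, op_mul, mul_smul]
      | add a b ha hb => rw [map_add, map_add, map_add, ha, hb]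
  m0_one := by
    intro k
    try dsimp only
    induction k using Submodule.Quotient.induction_on with
    | _ t =>
      rw [kSmul0_mk]
      congr 1
      induction t with
      | zero => simp
      | tmul x y => simp [smulLeftMap_tmul]
      | add a b ha hb => rw [map_add, ha, hb]
  m1_add_left k k' r := map_add _ k k'
  m1_add_right := by
    intro k r r'
    try dsimp only
    induction k using Submodule.Quotient.induction_on with
    | _ t =>
      rw [kSmul1_mk, kSmul1_mk, kSmul1_mk, ← Submodule.Quotient.mk_add]
      congr 1
      induction t with
      | zero => simp
      | tmul x y => simp [smulRightMap_tmul, op_add, add_smul, TensorProduct.tmul_add]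
      | add a b ha hb => rw [map_add, map_add, map_add, ha, hb]; abel
  m1_mul := by
    intro k r r'
    try dsimp only
    induction k using Submodule.Quotient.induction_on with
    | _ t =>
      rw [kSmul1_mk, kSmul1_mk, kSmul1_mk]
      congr 1
      induction t with
      | zero => simp
      | tmul x y => simp [smulRightMap_tmul, op_mul, mul_smul]
      | add a b ha hb => rw [map_add, map_add, map_add, ha, hb]
  m1_one := by
    intro k
    try dsimp only
    induction k using Submodule.Quotient.induction_on with
    | _ t =>
      rw [kSmul1_mk]
      congr 1
      induction t with
      | zero => simp
      | tmul x y => simp [smulRightMap_tmul]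
      | add a b ha hb => rw [map_add, ha, hb]
  comm := by
    intro k a c
    try dsimp only
    induction k using Submodule.Quotient.induction_on with
    | _ t =>
      rw [kSmul0_mk, kSmul1_mk, kSmul1_mk, kSmul0_mk]
      congr 1
      induction t with
      | zero => simp
      | tmul x y => simp [smulLeftMap_tmul, smulRightMap_tmul]
      | add p q hp hq => rw [map_add, map_add, map_add, map_add, hp, hq]

/-- The universal general bilinear form `b_α : M × M → K_α`. -/
noncomputable def balpha (α : Module.End Rᵐᵒᵖ M → Module.End Rᵐᵒᵖ M) :
    GBF R M (Kalpha α) (KalphaDM α) where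
  b x y := Submodule.Quotient.mk (x ⊗ₜ[ℤ] y)
  add_left x x' y := by
    try dsimp only
    rw [TensorProduct.add_tmul, Submodule.Quotient.mk_add]
  add_right x y y' := by
    try dsimp only
    rw [TensorProduct.tmul_add, Submodule.Quotient.mk_add]
  smul_left x y r := by
    show _ = kSmul0 α r (Submodule.Quotient.mk (x ⊗ₜ[ℤ] y))
    rw [kSmul0_mk]
    congr 1
  smul_right x y r := by
    show _ = kSmul1 α r (Submodule.Quotient.mk (x ⊗ₜ[ℤ] y))
    rw [kSmul1_mk]
    congr 1

end Kalpha

end Core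

theorem DoubleModule.m0_zero {R : Type u} [Ring R] {K : Type w} [AddCommGroup K]
    (DK : DoubleModule R K) (r : R) : DK.m0 0 r = 0 := by
  have h := DK.m0_add_left 0 0 r
  rw [add_zero] at h
  exact right_eq_add.mp h

theorem DoubleModule.m0_sum {R : Type u} [Ring R] {K : Type w} [AddCommGroup K]
    (DK : DoubleModule R K) {ι : Type*} (s : Finset ι) (g : ι → K) (r : R) :
    DK.m0 (∑ i ∈ s, g i) r = ∑ i ∈ s, DK.m0 (g i) r := by
  classical
  induction s using Finset.cons_induction with
  | empty => simpa using DK.m0_zero r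
  | cons a s ha ih => rw [Finset.sum_cons, Finset.sum_cons, DK.m0_add_left, ih]

theorem DoubleModule.m1_zero {R : Type u} [Ring R] {K : Type w} [AddCommGroup K]
    (DK : DoubleModule R K) (r : R) : DK.m1 0 r = 0 := by
  have h := DK.m1_add_left 0 0 r
  rw [add_zero] at h
  exact right_eq_add.mp h

theorem DoubleModule.m1_sum {R : Type u} [Ring R] {K : Type w} [AddCommGroup K]
    (DK : DoubleModule R K) {ι : Type*} (s : Finset ι) (g : ι → K) (r : R) :
    DK.m1 (∑ i ∈ s, g i) r = ∑ i ∈ s, DK.m1 (g i) r := by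
  classical
  induction s using Finset.cons_induction with
  | empty => simpa using DK.m1_zero r
  | cons a s ha ih => rw [Finset.sum_cons, Finset.sum_cons, DK.m1_add_left, ih]

/-- The `n`-fold orthogonal sum `n · b` of a general bilinear form `b`, a form on `Mⁿ`. -/
def sumForm {R : Type u} [Ring R] {M : Type v} [AddCommGroup M] [Module Rᵐᵒᵖ M]
    {K : Type w} [AddCommGroup K] {DK : DoubleModule R K}
    (β : GBF R M K DK) (n : ℕ) : GBF R (Fin n → M) K DK where
  b x y := ∑ i, β.b (x i) (y i)
  add_left x x' y := by
    try dsimp only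
    rw [← Finset.sum_add_distrib]
    exact Finset.sum_congr rfl fun i _ => β.add_left (x i) (x' i) (y i)
  add_right x y y' := by
    try dsimp only
    rw [← Finset.sum_add_distrib]
    exact Finset.sum_congr rfl fun i _ => β.add_right (x i) (y i) (y' i)
  smul_left x y r := by
    try dsimp only
    rw [DK.m0_sum]
    exact Finset.sum_congr rfl fun i _ => β.smul_left (x i) (y i) r
  smul_right x y r := by
    try dsimp only
    rw [DK.m1_sum]
    exact Finset.sum_congr rfl fun i _ => β.smul_right (x i) (y i) r

/-- The `(i,j)` matrix entry of an endomorphism of `Mⁿ`. -/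
def matEntry {R : Type u} [Ring R] {M : Type v} [AddCommGroup M] [Module Rᵐᵒᵖ M] {n : ℕ}
    (φ : Module.End Rᵐᵒᵖ (Fin n → M)) (i j : Fin n) : Module.End Rᵐᵒᵖ M :=
  (LinearMap.proj i) ∘ₗ φ ∘ₗ (LinearMap.single Rᵐᵒᵖ (fun _ : Fin n => M) j)

/-- The anti-endomorphism `T_nα` of `End_R(Mⁿ) = Matₙ(End_R(M))`: transpose followed by
entrywise application of `α`. -/
noncomputable def TnAlpha {R : Type u} [Ring R] {M : Type v} [AddCommGroup M] [Module Rᵐᵒᵖ M]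
    {n : ℕ} (α : Module.End Rᵐᵒᵖ M → Module.End Rᵐᵒᵖ M)
    (φ : Module.End Rᵐᵒᵖ (Fin n → M)) : Module.End Rᵐᵒᵖ (Fin n → M) :=
  ∑ i : Fin n, ∑ j : Fin n,
    (LinearMap.single Rᵐᵒᵖ (fun _ : Fin n => M) i) ∘ₗ (α (matEntry φ j i)) ∘ₗ
      (LinearMap.proj j)

section Stmt14Aux

variable {R : Type u} [Ring R] {M : Type v} [AddCommGroup M] [Module Rᵐᵒᵖ M]

theorem isAntiEndo_map_zero {W : Type*} [Ring W] {α : W → W} (hα : IsAntiEndo α) :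
    α 0 = 0 := by
  have h := hα.1 0 0
  rw [add_zero] at h
  exact right_eq_add.mp h

theorem kalpha_mk_rel (α : Module.End Rᵐᵒᵖ M → Module.End Rᵐᵒᵖ M)
    (w : Module.End Rᵐᵒᵖ M) (u v : M) :
    (Submodule.Quotient.mk ((w u) ⊗ₜ[ℤ] v) : Kalpha α) =
      Submodule.Quotient.mk (u ⊗ₜ[ℤ] (α w v)) := by
  rw [Submodule.Quotient.eq]
  exact Submodule.subset_span ⟨w, u, v, rfl⟩

theorem kalpha_mk_sum (α : Module.End Rᵐᵒᵖ M → Module.End Rᵐᵒᵖ M)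
    {ι : Type*} (s : Finset ι) (t : ι → M ⊗[ℤ] M) :
    (Submodule.Quotient.mk (∑ i ∈ s, t i) : Kalpha α) =
      ∑ i ∈ s, (Submodule.Quotient.mk (t i) : Kalpha α) := by
  rw [← Submodule.mkQ_apply, map_sum]
  rfl

variable {n : ℕ}

theorem matEntry_apply (φ : Module.End Rᵐᵒᵖ (Fin n → M)) (i j : Fin n) (u : M) :
    matEntry φ i j u = φ (Pi.single j u) i := by
  simp [matEntry]

theorem endo_apply_coord (φ : Module.End Rᵐᵒᵖ (Fin n → M)) (x : Fin n → M) (i : Fin n) :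
    φ x i = ∑ j, matEntry φ i j (x j) := by
  conv_lhs => rw [← Finset.univ_sum_single x]
  rw [map_sum]
  simp [matEntry_apply, Finset.sum_apply]

theorem TnAlpha_apply_coord (α : Module.End Rᵐᵒᵖ M → Module.End Rᵐᵒᵖ M)
    (φ : Module.End Rᵐᵒᵖ (Fin n → M)) (z : Fin n → M) (k : Fin n) :
    TnAlpha α φ z k = ∑ j, α (matEntry φ j k) (z j) := by
  rw [TnAlpha]
  simp only [LinearMap.coe_sum, Finset.sum_apply, LinearMap.comp_apply,
    LinearMap.proj_apply, LinearMap.coe_single, Pi.single_apply]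
  rw [Finset.sum_comm]
  simp

theorem matEntry_EwE (w : Module.End Rᵐᵒᵖ M) (i j a b : Fin n) :
    matEntry ((LinearMap.single Rᵐᵒᵖ (fun _ : Fin n => M) i) ∘ₗ w ∘ₗ
        (LinearMap.proj j : (Fin n → M) →ₗ[Rᵐᵒᵖ] M)) a b =
      if a = i ∧ j = b then w else 0 := by
  ext u
  rw [matEntry_apply]
  simp only [LinearMap.comp_apply, LinearMap.proj_apply, LinearMap.coe_single]
  rw [Pi.single_apply, Pi.single_apply]
  by_cases h1 : a = i <;> by_cases h2 : j = b <;> simp [h1, h2]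

theorem TnAlpha_EwE_single {α : Module.End Rᵐᵒᵖ M → Module.End Rᵐᵒᵖ M}
    (h0 : α 0 = 0) (w : Module.End Rᵐᵒᵖ M) (i j k : Fin n) (v : M) :
    TnAlpha α ((LinearMap.single Rᵐᵒᵖ (fun _ : Fin n => M) i) ∘ₗ w ∘ₗ
        (LinearMap.proj j : (Fin n → M) →ₗ[Rᵐᵒᵖ] M)) (Pi.single k v) =
      if k = i then (Pi.single j (α w v) : Fin n → M) else 0 := by
  funext a
  rw [TnAlpha_apply_coord]
  rw [Finset.sum_eq_single k (fun b _ hb => by rw [Pi.single_eq_of_ne hb, map_zero])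
    (fun h => absurd (Finset.mem_univ k) h)]
  rw [Pi.single_eq_same, matEntry_EwE]
  by_cases h1 : k = i <;> by_cases h2 : j = a <;>
    simp [h1, h2, h0, Pi.single_apply, eq_comm]

/-- The bilinear map underlying `f : K_{T_nα} → K_α`. -/
noncomputable def fBil (α : Module.End Rᵐᵒᵖ M → Module.End Rᵐᵒᵖ M) (n : ℕ) :
    (Fin n → M) →ₗ[ℤ] (Fin n → M) →ₗ[ℤ] Kalpha (M := M) α :=
  LinearMap.mk₂ ℤ
    (fun x y => ∑ i, (Submodule.Quotient.mk ((x i) ⊗ₜ[ℤ] (y i)) : Kalpha α))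
    (fun x x' y => by
      simp only [Pi.add_apply, TensorProduct.add_tmul, Submodule.Quotient.mk_add]
      rw [Finset.sum_add_distrib])
    (fun c x y => by
      rw [Finset.smul_sum]
      refine Finset.sum_congr rfl fun i _ => ?_
      rw [Pi.smul_apply, ← Submodule.Quotient.mk_smul]; congr 1)
    (fun x y y' => by
      simp only [Pi.add_apply, TensorProduct.tmul_add, Submodule.Quotient.mk_add]
      rw [Finset.sum_add_distrib])
    (fun c x y => by
      rw [Finset.smul_sum]
      refine Finset.sum_congr rfl fun i _ => ?_
      rw [Pi.smul_apply, ← Submodule.Quotient.mk_smul]; congr 1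
      exact map_zsmul (TensorProduct.mk ℤ _ _ (x i)) c (y i))

/-- The linear map `Mⁿ ⊗ Mⁿ → K_α` underlying `f`. -/
noncomputable def fTens (α : Module.End Rᵐᵒᵖ M → Module.End Rᵐᵒᵖ M) (n : ℕ) :
    ((Fin n → M) ⊗[ℤ] (Fin n → M)) →ₗ[ℤ] Kalpha (M := M) α :=
  TensorProduct.lift (fBil α n)

theorem fTens_tmul (α : Module.End Rᵐᵒᵖ M → Module.End Rᵐᵒᵖ M) (n : ℕ)
    (x y : Fin n → M) :
    fTens α n (x ⊗ₜ[ℤ] y) = ∑ i, (Submodule.Quotient.mk ((x i) ⊗ₜ[ℤ] (y i)) : Kalpha α) := by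
  rw [fTens]
  erw [TensorProduct.lift.tmul]
  rfl

theorem fTens_ker (α : Module.End Rᵐᵒᵖ M → Module.End Rᵐᵒᵖ M) (n : ℕ) :
    kalphaRel (TnAlpha (n := n) α) ≤ LinearMap.ker (fTens (M := M) α n) := by
  rw [kalphaRel, Submodule.span_le]
  rintro _ ⟨w, x, y, rfl⟩
  rw [SetLike.mem_coe, LinearMap.mem_ker, map_sub, sub_eq_zero, fTens_tmul, fTens_tmul]
  calc ∑ i, (Submodule.Quotient.mk (((w x) i) ⊗ₜ[ℤ] (y i)) : Kalpha α)
      = ∑ i, ∑ j, (Submodule.Quotient.mk ((matEntry w i j (x j)) ⊗ₜ[ℤ] (y i)) : Kalpha α) := by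
        refine Finset.sum_congr rfl fun i _ => ?_
        rw [endo_apply_coord, TensorProduct.sum_tmul, kalpha_mk_sum]
    _ = ∑ i, ∑ j, (Submodule.Quotient.mk ((x j) ⊗ₜ[ℤ] (α (matEntry w i j) (y i))) : Kalpha α) :=
        Finset.sum_congr rfl fun i _ => Finset.sum_congr rfl fun j _ =>
          kalpha_mk_rel α _ _ _
    _ = ∑ i, (Submodule.Quotient.mk ((x i) ⊗ₜ[ℤ] ((TnAlpha α w y) i)) : Kalpha α) := by
        rw [Finset.sum_comm]
        refine Finset.sum_congr rfl fun j _ => ?_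
        rw [TnAlpha_apply_coord, TensorProduct.tmul_sum, kalpha_mk_sum]

/-- The double-module homomorphism `f : K_{T_nα} → K_α`. -/
noncomputable def fMap (α : Module.End Rᵐᵒᵖ M → Module.End Rᵐᵒᵖ M) (n : ℕ) :
    Kalpha (M := Fin n → M) (TnAlpha α) →ₗ[ℤ] Kalpha (M := M) α :=
  Submodule.liftQ _ (fTens α n) (fTens_ker α n)

theorem fMap_mk_tmul (α : Module.End Rᵐᵒᵖ M → Module.End Rᵐᵒᵖ M) (n : ℕ)
    (x y : Fin n → M) :
    fMap α n (Submodule.Quotient.mk (x ⊗ₜ[ℤ] y)) =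
      ∑ i, (Submodule.Quotient.mk ((x i) ⊗ₜ[ℤ] (y i)) : Kalpha α) := by
  rw [fMap, Submodule.liftQ_apply, fTens_tmul]

/-- The bilinear map underlying `g : K_α → K_{T_nα}`. -/
noncomputable def gBil (α : Module.End Rᵐᵒᵖ M → Module.End Rᵐᵒᵖ M) (n : ℕ) (i0 : Fin n) :
    M →ₗ[ℤ] M →ₗ[ℤ] Kalpha (M := Fin n → M) (TnAlpha α) :=
  LinearMap.mk₂ ℤ
    (fun x y => Submodule.Quotient.mk
      ((Pi.single i0 x : Fin n → M) ⊗ₜ[ℤ] (Pi.single i0 y : Fin n → M)))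
    (fun x x' y => by
      rw [Pi.single_add, TensorProduct.add_tmul, Submodule.Quotient.mk_add])
    (fun c x y => by
      rw [Pi.single_smul, ← Submodule.Quotient.mk_smul]; congr 1)
    (fun x y y' => by
      rw [Pi.single_add, TensorProduct.tmul_add, Submodule.Quotient.mk_add])
    (fun c x y => by
      rw [Pi.single_smul, ← Submodule.Quotient.mk_smul]; congr 1
      exact map_zsmul (TensorProduct.mk ℤ _ _ (Pi.single i0 x : Fin n → M)) c _)

theorem gTens_ker {α : Module.End Rᵐᵒᵖ M → Module.End Rᵐᵒᵖ M} (h0 : α 0 = 0)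
    (n : ℕ) (i0 : Fin n) :
    kalphaRel α ≤ LinearMap.ker (TensorProduct.lift (gBil (M := M) α n i0)) := by
  erw [kalphaRel, Submodule.span_le]
  rintro _ ⟨w, u, v, rfl⟩
  erw [SetLike.mem_coe, LinearMap.mem_ker, map_sub, sub_eq_zero,
    TensorProduct.lift.tmul, TensorProduct.lift.tmul]
  show (Submodule.Quotient.mk ((Pi.single i0 (w u) : Fin n → M) ⊗ₜ[ℤ] Pi.single i0 v)
      : Kalpha (TnAlpha α)) =
    Submodule.Quotient.mk ((Pi.single i0 u : Fin n → M) ⊗ₜ[ℤ] Pi.single i0 (α w v))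
  have hE : (((LinearMap.single Rᵐᵒᵖ (fun _ : Fin n => M) i0) ∘ₗ w ∘ₗ
      (LinearMap.proj i0 : (Fin n → M) →ₗ[Rᵐᵒᵖ] M)) : Module.End Rᵐᵒᵖ (Fin n → M))
      (Pi.single i0 u) = (Pi.single i0 (w u) : Fin n → M) := by
    simp
  rw [← hE, kalpha_mk_rel, TnAlpha_EwE_single h0, if_pos rfl]

/-- The double-module homomorphism `g : K_α → K_{T_nα}`, inverse to `f`. -/
noncomputable def gMap {α : Module.End Rᵐᵒᵖ M → Module.End Rᵐᵒᵖ M} (h0 : α 0 = 0)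
    (n : ℕ) (i0 : Fin n) :
    Kalpha (M := M) α →ₗ[ℤ] Kalpha (M := Fin n → M) (TnAlpha α) :=
  Submodule.liftQ _ (TensorProduct.lift (gBil α n i0)) (gTens_ker h0 n i0)

theorem gMap_mk_tmul {α : Module.End Rᵐᵒᵖ M → Module.End Rᵐᵒᵖ M} (h0 : α 0 = 0)
    (n : ℕ) (i0 : Fin n) (u v : M) :
    gMap h0 n i0 (Submodule.Quotient.mk (u ⊗ₜ[ℤ] v)) =
      Submodule.Quotient.mk
        ((Pi.single i0 u : Fin n → M) ⊗ₜ[ℤ] (Pi.single i0 v : Fin n → M)) := by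
  erw [gMap, Submodule.liftQ_apply, TensorProduct.lift.tmul]
  rfl

theorem kalpha_mk_diag {α : Module.End Rᵐᵒᵖ M → Module.End Rᵐᵒᵖ M}
    (h0 : α 0 = 0) (h1 : α 1 = 1) (i0 : Fin n) (x y : Fin n → M) :
    (Submodule.Quotient.mk (x ⊗ₜ[ℤ] y) : Kalpha (TnAlpha α)) =
      ∑ i, (Submodule.Quotient.mk
        ((Pi.single i0 (x i) : Fin n → M) ⊗ₜ[ℤ] (Pi.single i0 (y i) : Fin n → M))
        : Kalpha (TnAlpha α)) := by
  conv_lhs => rw [← Finset.univ_sum_single x, ← Finset.univ_sum_single y]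
  rw [TensorProduct.sum_tmul, kalpha_mk_sum]
  refine Finset.sum_congr rfl fun i _ => ?_
  rw [TensorProduct.tmul_sum, kalpha_mk_sum]
  have hE : ((LinearMap.single Rᵐᵒᵖ (fun _ : Fin n => M) i) ∘ₗ (1 : Module.End Rᵐᵒᵖ M) ∘ₗ
      (LinearMap.proj i0 : (Fin n → M) →ₗ[Rᵐᵒᵖ] M) : Module.End Rᵐᵒᵖ (Fin n → M))
      (Pi.single i0 (x i)) = (Pi.single i (x i) : Fin n → M) := by
    simp
  calc ∑ j, (Submodule.Quotient.mk
        ((Pi.single i (x i) : Fin n → M) ⊗ₜ[ℤ] (Pi.single j (y j) : Fin n → M))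
        : Kalpha (TnAlpha α))
      = ∑ j, Submodule.Quotient.mk ((Pi.single i0 (x i) : Fin n → M) ⊗ₜ[ℤ]
          (if j = i then (Pi.single i0 (y j) : Fin n → M) else 0)) := by
        refine Finset.sum_congr rfl fun j _ => ?_
        rw [← hE, kalpha_mk_rel, TnAlpha_EwE_single h0, h1]
        simp only [Module.End.one_apply]
    _ = Submodule.Quotient.mk
          ((Pi.single i0 (x i) : Fin n → M) ⊗ₜ[ℤ] (Pi.single i0 (y i) : Fin n → M)) := by
        rw [Finset.sum_eq_single i (fun j _ hj => by
            rw [if_neg hj, TensorProduct.tmul_zero, Submodule.Quotient.mk_zero])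
          (fun h => absurd (Finset.mem_univ i) h), if_pos rfl]

end Stmt14Aux

/-- `b_{T_nα}` is similar to the `n`-fold orthogonal sum `n · b_α`. -/
theorem stmt_14 {R : Type u} [Ring R] {M : Type v} [AddCommGroup M] [Module Rᵐᵒᵖ M]
    (n : ℕ) (hn : 1 ≤ n)
    (α : Module.End Rᵐᵒᵖ M → Module.End Rᵐᵒᵖ M) (hα : IsAntiEndo α) :
    (balpha (M := Fin n → M) (TnAlpha α)).Similar (sumForm (balpha (M := M) α) n) := by
  classical
  have h0 : α 0 = 0 := isAntiEndo_map_zero hα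
  have h1 : α 1 = 1 := hα.2.1
  let i0 : Fin n := ⟨0, hn⟩
  refine ⟨fMap α n, ⟨⟨fun k k' => map_add _ k k', ?_, ?_⟩, ?_⟩,
    fun x y => (fMap_mk_tmul α n x y).symm⟩
  · -- m0 compatibility
    intro k r
    show fMap α n (kSmul0 (TnAlpha α) r k) = kSmul0 α r (fMap α n k)
    induction k using Submodule.Quotient.induction_on with
    | _ t =>
      rw [kSmul0_mk]
      induction t with
      | zero => simp
      | tmul x y =>
        rw [smulLeftMap_tmul, fMap_mk_tmul, fMap_mk_tmul, map_sum]
        refine Finset.sum_congr rfl fun i _ => ?_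
        rw [kSmul0_mk, smulLeftMap_tmul]
        rfl
      | add a b ha hb =>
        rw [map_add, Submodule.Quotient.mk_add, map_add, Submodule.Quotient.mk_add,
          map_add, map_add, ha, hb]
  · -- m1 compatibility
    intro k r
    show fMap α n (kSmul1 (TnAlpha α) r k) = kSmul1 α r (fMap α n k)
    induction k using Submodule.Quotient.induction_on with
    | _ t =>
      rw [kSmul1_mk]
      induction t with
      | zero => simp
      | tmul x y =>
        rw [smulRightMap_tmul, fMap_mk_tmul, fMap_mk_tmul, map_sum]
        refine Finset.sum_congr rfl fun i _ => ?_
        rw [kSmul1_mk, smulRightMap_tmul]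
        rfl
      | add a b ha hb =>
        rw [map_add, Submodule.Quotient.mk_add, map_add, Submodule.Quotient.mk_add,
          map_add, map_add, ha, hb]
  · -- bijectivity
    refine Function.bijective_iff_has_inverse.mpr ⟨gMap h0 n i0, ?_, ?_⟩
    · -- g ∘ f = id
      intro k
      induction k using Submodule.Quotient.induction_on with
      | _ t =>
        induction t with
        | zero => simp
        | tmul x y =>
          rw [fMap_mk_tmul, map_sum]
          rw [kalpha_mk_diag h0 h1 i0 x y]
          exact Finset.sum_congr rfl fun i _ => gMap_mk_tmul h0 n i0 (x i) (y i)
        | add a b ha hb =>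
          rw [Submodule.Quotient.mk_add, map_add, map_add, ha, hb]
    · -- f ∘ g = id
      intro k
      induction k using Submodule.Quotient.induction_on with
      | _ t =>
        induction t with
        | zero => simp
        | tmul u v =>
          rw [gMap_mk_tmul, fMap_mk_tmul]
          rw [Finset.sum_eq_single i0 (fun i _ hi => by
              rw [Pi.single_eq_of_ne hi, TensorProduct.zero_tmul,
                Submodule.Quotient.mk_zero])
            (fun h => absurd (Finset.mem_univ i0) h)]
          rw [Pi.single_eq_same, Pi.single_eq_same]
        | add a b ha hb =>
          rw [Submodule.Quotient.mk_add, map_add, map_add, ha, hb]
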